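/- arXiv:1606.01295 — 5 statements merged into one kernel-verified Lean document; each statement's English description precedes it below -/
import Mathlib

section
/- Let x ∈ ℝ^n, let T₀ be a set of s indices containing the s largest-magnitude entries of x, and let T̃₁,…,T̃_N ⊆ {1,…,n} (1 ≤ N ≤ n) be pairwise disjoint sets with union T̃, with |T̃ᵢ| = ρᵢs and |T̃ᵢ ∩ T₀| = αᵢρᵢs. Let 1 ≥ w₁ ≥ w₂ ≥ … ≥ w_N ≥ 0 and suppose a > 1 with as a positive integer and Σ_{i=1}^N ρᵢ(1−αᵢ) ≤ a. Suppose A ∈ ℝ^{m×n} satisfies the restricted isometry bound with constant δ_{as} at level as and with constant δ_{(a+1)s} at level (a+1)s, and that δ_{as} + (a/K_N²)·δ_{(a+1)s} < a/K_N² − 1. Let y = Ax + z with ‖z‖₂ ≤ ε, and let x̂ satisfy ‖Ax̂ − y‖₂ ≤ ε and ‖x̂‖_{1,w} ≤ ‖x‖_{1,w} (in particular, any minimizer of the weighted ℓ1 norm over the feasible set). Then ‖x̂ − x‖₂ ≤ C₀'ε + C₁'s^{−1/2}( (Σᵢwᵢ)‖x_{T₀ᶜ}‖₁ + (1−Σᵢwᵢ)‖x_{T̃ᶜ∩T₀ᶜ}‖₁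 − Σ_{i=1}^N Σ_{j≠i} w_j‖x_{T̃ᵢ∩T₀ᶜ}‖₁ ), where C₀' = 2(1 + K_N/√a)/(√(1−δ_{(a+1)s}) − (K_N/√a)√(1+δ_{as})) and C₁' = 2a^{−1/2}(√(1−δ_{(a+1)s}) + √(1+δ_{as}))/(√(1−δ_{(a+1)s}) − (K_N/√a)√(1+δ_{as})). -/
open Finset

/-- The restriction of a vector to a set of indices: agrees with `x` on `S`, zero elsewhere. -/
noncomputable def restr {n : ℕ} (x : Fin n → ℝ) (S : Finset (Fin n)) : Fin n → ℝ :=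
  fun i => if i ∈ S then x i else 0

/-- The ℓ1 norm of a vector in ℝ^n. -/
noncomputable def nrm1 {n : ℕ} (x : Fin n → ℝ) : ℝ := ∑ i, |x i|

/-- The ℓ2 (Euclidean) norm of a vector in ℝ^n. -/
noncomputable def nrm2 {n : ℕ} (x : Fin n → ℝ) : ℝ := Real.sqrt (∑ i, (x i) ^ 2)

/-- The weighted ℓ1 norm associated with support-estimate sets `T 1, …, T N`
(with weights `w 1, …, w N`), where weight `1` is used off `⋃ i, T i`. -/
noncomputable def wl1 {n : ℕ} (N : ℕ) (T : ℕ → Finset (Fin n)) (w : ℕ → ℝ)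
    (x : Fin n → ℝ) : ℝ :=
  ∑ i ∈ Finset.Icc 1 N, w i * nrm1 (restr x (T i)) +
    nrm1 (restr x ((Finset.Icc 1 N).biUnion T)ᶜ)

/-- `A` satisfies the restricted isometry bound with constant `δ` at sparsity level `k`. -/
def RIPBound {m n : ℕ} (A : Matrix (Fin m) (Fin n) ℝ) (δ : ℝ) (k : ℕ) : Prop :=
  ∀ v : Fin n → ℝ, (Finset.univ.filter fun i => v i ≠ 0).card ≤ k →
    (1 - δ) * (nrm2 v) ^ 2 ≤ (nrm2 (A.mulVec v)) ^ 2 ∧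
      (nrm2 (A.mulVec v)) ^ 2 ≤ (1 + δ) * (nrm2 v) ^ 2

/-- The constant `K_N` appearing in the multi-weight recovery guarantee. -/
noncomputable def KN (N : ℕ) (w ρ α : ℕ → ℝ) : ℝ :=
  w N + (1 - w 1) * Real.sqrt (1 + ∑ i ∈ Finset.Icc 1 N, (ρ i - 2 * α i * ρ i)) +
    ∑ j ∈ Finset.Icc 2 N, (w (j - 1) - w j) *
      Real.sqrt (1 + ∑ i ∈ Finset.Icc j N, (ρ i - 2 * α i * ρ i))

/-- The quantity `D` appearing in the multi-weight error bounds. -/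
noncomputable def DD {n : ℕ} (N : ℕ) (T : ℕ → Finset (Fin n)) (T₀ : Finset (Fin n))
    (w : ℕ → ℝ) (x : Fin n → ℝ) : ℝ :=
  (∑ i ∈ Finset.Icc 1 N, w i) * nrm1 (restr x T₀ᶜ) +
    (1 - ∑ i ∈ Finset.Icc 1 N, w i) *
      nrm1 (restr x (((Finset.Icc 1 N).biUnion T)ᶜ ∩ T₀ᶜ)) -
    ∑ i ∈ Finset.Icc 1 N, (∑ j ∈ (Finset.Icc 1 N).erase i, w j) *
      nrm1 (restr x (T i ∩ T₀ᶜ))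

/-- The set `S_j = (T₀ ∪ ⋃_{i=j}^N T̃ᵢ) \ ⋃_{i=j}^N (T̃ᵢ ∩ T₀)`. -/
def SS {n : ℕ} (N : ℕ) (T : ℕ → Finset (Fin n)) (T₀ : Finset (Fin n)) (j : ℕ) :
    Finset (Fin n) :=
  (T₀ ∪ (Finset.Icc j N).biUnion T) \ (Finset.Icc j N).biUnion (fun i => T i ∩ T₀)


section AuxLemmas

variable {n : ℕ}

lemma nrm1_restr (v : Fin n → ℝ) (S : Finset (Fin n)) :
    nrm1 (restr v S) = ∑ i ∈ S, |v i| := by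
  unfold nrm1 restr
  rw [← Finset.sum_subset (Finset.subset_univ S) (by intro i _ hi; simp [hi])]
  exact Finset.sum_congr rfl (by intro i hi; simp [hi])

lemma nrm1_restr_nonneg (v : Fin n → ℝ) (S : Finset (Fin n)) : 0 ≤ nrm1 (restr v S) := by
  rw [nrm1_restr]; exact Finset.sum_nonneg fun i _ => abs_nonneg _

lemma nrm2_nonneg (v : Fin n → ℝ) : 0 ≤ nrm2 v := Real.sqrt_nonneg _

lemma sum_sq_nonneg' (v : Fin n → ℝ) (S : Finset (Fin n)) : (0:ℝ) ≤ ∑ i ∈ S, (v i)^2 :=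
  Finset.sum_nonneg fun i _ => sq_nonneg _

lemma nrm2_sq (v : Fin n → ℝ) : (nrm2 v)^2 = ∑ i, (v i)^2 :=
  Real.sq_sqrt (sum_sq_nonneg' v Finset.univ)

lemma nrm2_restr_sq (v : Fin n → ℝ) (S : Finset (Fin n)) :
    (nrm2 (restr v S))^2 = ∑ i ∈ S, (v i)^2 := by
  rw [nrm2_sq]
  rw [← Finset.sum_subset (Finset.subset_univ S) (by intro i _ hi; simp [restr, hi])]
  exact Finset.sum_congr rfl (by intro i hi; simp [restr, hi])

lemma nrm2_eq_sqrt_sum (v : Fin n → ℝ) (S : Finset (Fin n)) :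
    nrm2 (restr v S) = Real.sqrt (∑ i ∈ S, (v i)^2) := by
  rw [← nrm2_restr_sq, Real.sqrt_sq (nrm2_nonneg _)]

lemma nrm2_restr_mono (v : Fin n → ℝ) {S U : Finset (Fin n)} (h : S ⊆ U) :
    nrm2 (restr v S) ≤ nrm2 (restr v U) := by
  rw [nrm2_eq_sqrt_sum, nrm2_eq_sqrt_sum]
  exact Real.sqrt_le_sqrt (Finset.sum_le_sum_of_subset_of_nonneg h (fun i _ _ => sq_nonneg _))

lemma nrm2_eq_norm (v : Fin n → ℝ) :
    nrm2 v = ‖(WithLp.equiv 2 (Fin n → ℝ)).symm v‖ := by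
  rw [EuclideanSpace.norm_eq]
  unfold nrm2; congr 1
  exact Finset.sum_congr rfl
    (by intro i _; simp [WithLp.equiv_symm_apply, Real.norm_eq_abs, sq_abs])

lemma nrm2_triangle (f g : Fin n → ℝ) : nrm2 (f + g) ≤ nrm2 f + nrm2 g := by
  rw [nrm2_eq_norm, nrm2_eq_norm, nrm2_eq_norm]
  exact norm_add_le ((WithLp.equiv 2 (Fin n → ℝ)).symm f) ((WithLp.equiv 2 (Fin n → ℝ)).symm g)

lemma nrm2_sub_le (f g : Fin n → ℝ) : nrm2 (f - g) ≤ nrm2 f + nrm2 g := by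
  rw [nrm2_eq_norm, nrm2_eq_norm, nrm2_eq_norm]
  exact norm_sub_le ((WithLp.equiv 2 (Fin n → ℝ)).symm f) ((WithLp.equiv 2 (Fin n → ℝ)).symm g)

lemma nrm1_le_sqrt_card (v : Fin n → ℝ) (S : Finset (Fin n)) :
    nrm1 (restr v S) ≤ Real.sqrt S.card * nrm2 (restr v S) := by
  rw [nrm1_restr, nrm2_eq_sqrt_sum]
  have h := Finset.sum_mul_sq_le_sq_mul_sq S (fun _ => (1:ℝ)) (fun i => |v i|)
  simp only [one_pow, one_mul, sq_abs, Finset.sum_const, nsmul_eq_mul, mul_one] at h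
  have h0 : (0:ℝ) ≤ ∑ i ∈ S, |v i| := Finset.sum_nonneg fun i _ => abs_nonneg _
  calc ∑ i ∈ S, |v i| = Real.sqrt ((∑ i ∈ S, |v i|)^2) := (Real.sqrt_sq h0).symm
    _ ≤ Real.sqrt ((S.card : ℝ) * ∑ i ∈ S, (v i)^2) := Real.sqrt_le_sqrt h
    _ = Real.sqrt S.card * Real.sqrt (∑ i ∈ S, (v i)^2) := Real.sqrt_mul (Nat.cast_nonneg _) _

lemma restr_union {v : Fin n → ℝ} {S U : Finset (Fin n)} (h : Disjoint S U) :
    restr v (S ∪ U) = restr v S + restr v U := by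
  funext i
  simp only [restr, Pi.add_apply, Finset.mem_union]
  by_cases hS : i ∈ S
  · have : i ∉ U := fun hU => (Finset.disjoint_left.1 h hS) hU
    simp [hS, this]
  · by_cases hU : i ∈ U <;> simp [hS, hU]

lemma nrm2_restr_le_bound (v : Fin n → ℝ) (S : Finset (Fin n)) (b : ℝ) (hb : 0 ≤ b)
    (h : ∀ i ∈ S, |v i| ≤ b) (c : ℝ) (hc : (S.card : ℝ) ≤ c) :
    nrm2 (restr v S) ≤ Real.sqrt c * b := by
  rw [nrm2_eq_sqrt_sum]
  have : ∑ i ∈ S, (v i)^2 ≤ c * b^2 := by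
    calc ∑ i ∈ S, (v i)^2 ≤ ∑ i ∈ S, b^2 := by
          refine Finset.sum_le_sum fun i hi => ?_
          rw [← sq_abs]; exact pow_le_pow_left₀ (abs_nonneg _) (h i hi) 2
      _ = (S.card : ℝ) * b^2 := by rw [Finset.sum_const, nsmul_eq_mul]
      _ ≤ c * b^2 := by nlinarith [sq_nonneg b]
  calc Real.sqrt (∑ i ∈ S, (v i)^2) ≤ Real.sqrt (c * b^2) := Real.sqrt_le_sqrt this
    _ ≤ Real.sqrt c * b := by
        rw [Real.sqrt_mul (le_trans (Nat.cast_nonneg S.card) hc), Real.sqrt_sq hb]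

lemma exists_top_subset (v : Fin n → ℝ) (S : Finset (Fin n)) :
    ∀ k : ℕ, k ≤ S.card → ∃ C ⊆ S, C.card = k ∧
      ∀ i ∈ S \ C, ∀ j ∈ C, |v i| ≤ |v j| := by
  intro k
  induction k with
  | zero => intro _; exact ⟨∅, Finset.empty_subset S, rfl, by simp⟩
  | succ k ih =>
    intro hk
    obtain ⟨C, hCS, hCcard, hCtop⟩ := ih (Nat.le_of_succ_le hk)
    have hne : (S \ C).Nonempty := by
      rw [← Finset.card_pos, Finset.card_sdiff_of_subset hCS]
      omega
    obtain ⟨m, hm, hmax⟩ := Finset.exists_max_image (S \ C) (fun i => |v i|) hne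
    refine ⟨insert m C, ?_, ?_, ?_⟩
    · exact Finset.insert_subset (Finset.mem_sdiff.1 hm).1 hCS
    · rw [Finset.card_insert_of_notMem (Finset.mem_sdiff.1 hm).2, hCcard]
    · intro i hi j hj
      have hi' : i ∈ S \ C := by
        rw [Finset.mem_sdiff] at hi ⊢
        exact ⟨hi.1, fun h => hi.2 (Finset.mem_insert_of_mem h)⟩
      rcases Finset.mem_insert.1 hj with rfl | hj'
      · exact hmax i hi'
      · exact hCtop i hi' j hj'

lemma top_subset_sq_sum_le (v : Fin n → ℝ) {S C V : Finset (Fin n)}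
    (hCS : C ⊆ S) (htop : ∀ i ∈ S \ C, ∀ j ∈ C, |v i| ≤ |v j|)
    (hVS : V ⊆ S) (hcard : V.card ≤ C.card) :
    ∑ i ∈ V, (v i)^2 ≤ ∑ i ∈ C, (v i)^2 := by
  have hsplitV : ∑ i ∈ V, (v i)^2 = ∑ i ∈ V ∩ C, (v i)^2 + ∑ i ∈ V \ C, (v i)^2 := by
    rw [Finset.sum_inter_add_sum_sdiff]
  have hsplitC : ∑ i ∈ C, (v i)^2 = ∑ i ∈ C ∩ V, (v i)^2 + ∑ i ∈ C \ V, (v i)^2 := by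
    rw [Finset.sum_inter_add_sum_sdiff]
  have hcard2 : (V \ C).card ≤ (C \ V).card := by
    have h1 : (V ∩ C).card + (V \ C).card = V.card := by
      rw [Finset.card_inter_add_card_sdiff]
    have h2 : (C ∩ V).card + (C \ V).card = C.card := by
      rw [Finset.card_inter_add_card_sdiff]
    rw [Finset.inter_comm] at h2
    omega
  have key : ∑ i ∈ V \ C, (v i)^2 ≤ ∑ i ∈ C \ V, (v i)^2 := by
    by_cases hCV : (C \ V).Nonempty
    · obtain ⟨j0, hj0, hmin⟩ := Finset.exists_min_image (C \ V) (fun i => |v i|) hCV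
      have hj0C : j0 ∈ C := (Finset.mem_sdiff.1 hj0).1
      calc ∑ i ∈ V \ C, (v i)^2 ≤ ∑ _i ∈ V \ C, (v j0)^2 := by
            refine Finset.sum_le_sum fun i hi => ?_
            have hiSC : i ∈ S \ C := by
              rw [Finset.mem_sdiff] at hi ⊢; exact ⟨hVS hi.1, hi.2⟩
            have := htop i hiSC j0 hj0C
            rw [← sq_abs (v i), ← sq_abs (v j0)]
            exact pow_le_pow_left₀ (abs_nonneg _) this 2
        _ = (V \ C).card * (v j0)^2 := by rw [Finset.sum_const, nsmul_eq_mul]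
        _ ≤ (C \ V).card * (v j0)^2 := by
            have := sq_nonneg (v j0)
            exact mul_le_mul_of_nonneg_right (by exact_mod_cast hcard2) this
        _ ≤ ∑ i ∈ C \ V, (v i)^2 := by
            calc ((C \ V).card : ℝ) * (v j0)^2 = ∑ _i ∈ C \ V, (v j0)^2 := by
                  rw [Finset.sum_const, nsmul_eq_mul]
              _ ≤ ∑ i ∈ C \ V, (v i)^2 := by
                  refine Finset.sum_le_sum fun i hi => ?_
                  rw [← sq_abs (v i), ← sq_abs (v j0)]
                  exact pow_le_pow_left₀ (abs_nonneg _) (hmin i hi) 2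
    · rw [Finset.not_nonempty_iff_eq_empty] at hCV
      have : (V \ C) = ∅ := by
        rw [← Finset.card_eq_zero]
        rw [hCV] at hcard2; simpa using hcard2
      simp [this, hCV]
  have hVC : ∑ i ∈ V ∩ C, (v i)^2 ≤ ∑ i ∈ C ∩ V, (v i)^2 := by
    rw [Finset.inter_comm]
  linarith

lemma chunk_bound (v : Fin n → ℝ) (c : ℕ) (hc : 0 < c) (F : (Fin n → ℝ) → ℝ)
    (hFadd : ∀ f g, F (f + g) ≤ F f + F g) (e : ℝ) (he : 0 ≤ e)
    (hFb : ∀ S : Finset (Fin n), S.card ≤ c → F (restr v S) ≤ e * nrm2 (restr v S)) :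
    ∀ W : Finset (Fin n), ∀ b : ℝ, 0 ≤ b → (∀ i ∈ W, |v i| ≤ b) →
      F (restr v W) ≤ e * (Real.sqrt c * b + (Real.sqrt c)⁻¹ * nrm1 (restr v W)) := by
  intro W
  induction W using Finset.strongInductionOn with
  | _ W ih =>
    intro b hb hbd
    have hsqc : (0:ℝ) < Real.sqrt c := Real.sqrt_pos.2 (by exact_mod_cast hc)
    by_cases hWc : W.card ≤ c
    · have h1 : F (restr v W) ≤ e * nrm2 (restr v W) := hFb W hWc
      have h2 : nrm2 (restr v W) ≤ Real.sqrt c * b :=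
        nrm2_restr_le_bound v W b hb hbd c (by exact_mod_cast hWc)
      have h3 : 0 ≤ (Real.sqrt c)⁻¹ * nrm1 (restr v W) :=
        mul_nonneg (by positivity) (nrm1_restr_nonneg v W)
      nlinarith
    · push_neg at hWc
      obtain ⟨C, hCW, hCcard, htop⟩ := exists_top_subset v W c (le_of_lt hWc)
      have hCne : C.Nonempty := Finset.card_pos.1 (by omega)
      set W' := W \ C with hW'
      obtain ⟨j0, hj0, hmin⟩ := Finset.exists_min_image C (fun i => |v i|) hCne
      set b' := |v j0| with hb'
      have hb'0 : 0 ≤ b' := abs_nonneg _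
      have hbd' : ∀ i ∈ W', |v i| ≤ b' := fun i hi => htop i hi j0 hj0
      have hss : W' ⊂ W := Finset.sdiff_ssubset hCW hCne
      have ihW' := ih W' hss b' hb'0 hbd'
      have hdisj : Disjoint C W' := Finset.disjoint_sdiff
      have hunion : C ∪ W' = W := Finset.union_sdiff_of_subset hCW
      have hre : restr v W = restr v C + restr v W' := by
        rw [← hunion]; exact restr_union hdisj
      have hF1 : F (restr v W) ≤ F (restr v C) + F (restr v W') := by
        rw [hre]; exact hFadd _ _
      have hFC : F (restr v C) ≤ e * (Real.sqrt c * b) := by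
        have h1 : F (restr v C) ≤ e * nrm2 (restr v C) := hFb C (le_of_eq hCcard)
        have h2 : nrm2 (restr v C) ≤ Real.sqrt c * b :=
          nrm2_restr_le_bound v C b hb (fun i hi => hbd i (hCW hi)) c
            (by exact_mod_cast le_of_eq hCcard)
        nlinarith
      have hcb' : Real.sqrt c * b' ≤ (Real.sqrt c)⁻¹ * nrm1 (restr v C) := by
        have h1 : (c : ℝ) * b' ≤ nrm1 (restr v C) := by
          rw [nrm1_restr]
          calc (c:ℝ) * b' = ∑ _i ∈ C, b' := by rw [Finset.sum_const, nsmul_eq_mul, hCcard]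
            _ ≤ ∑ i ∈ C, |v i| := Finset.sum_le_sum fun i hi => hmin i hi
        have h2 : Real.sqrt c * b' = (Real.sqrt c)⁻¹ * ((c:ℝ) * b') := by
          rw [← Real.mul_self_sqrt (le_of_lt (by exact_mod_cast hc : (0:ℝ) < c))]
          field_simp
          rw [Real.sqrt_sq hsqc.le]
        rw [h2]
        exact mul_le_mul_of_nonneg_left h1 (by positivity)
      have hnrm1 : nrm1 (restr v W) = nrm1 (restr v C) + nrm1 (restr v W') := by
        rw [nrm1_restr, nrm1_restr, nrm1_restr, ← hunion]
        exact Finset.sum_union hdisj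
      have hQ : e * (Real.sqrt c * b' + (Real.sqrt c)⁻¹ * nrm1 (restr v W')) ≤
          e * ((Real.sqrt c)⁻¹ * nrm1 (restr v C) + (Real.sqrt c)⁻¹ * nrm1 (restr v W')) :=
        mul_le_mul_of_nonneg_left (add_le_add hcb' le_rfl) he
      calc F (restr v W) ≤ e * (Real.sqrt c * b) +
            e * ((Real.sqrt c)⁻¹ * nrm1 (restr v C) + (Real.sqrt c)⁻¹ * nrm1 (restr v W')) := by
            linarith [le_trans ihW' hQ]
        _ = e * (Real.sqrt c * b + (Real.sqrt c)⁻¹ * nrm1 (restr v W)) := by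
            rw [hnrm1]; ring

end AuxLemmas

set_option maxHeartbeats 1600000 in
/-- main recovery guarantee for weighted ℓ1-minimization with `N` distinct
weights (Theorem: Weighted ℓ1-minimization with N distinct weights). -/
theorem weighted_l1_recovery_multi_weight
    {m n s N : ℕ} (hs : 0 < s) (hN1 : 1 ≤ N) (hNn : N ≤ n)
    (x : Fin n → ℝ) (T₀ : Finset (Fin n)) (hT₀card : T₀.card = s)
    (hT₀top : ∀ i ∉ T₀, ∀ j ∈ T₀, |x i| ≤ |x j|)
    (T : ℕ → Finset (Fin n))
    (hdisj : ∀ i ∈ Finset.Icc 1 N, ∀ j ∈ Finset.Icc 1 N, i ≠ j → Disjoint (T i) (T j))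
    (ρ α : ℕ → ℝ)
    (hρ : ∀ i ∈ Finset.Icc 1 N, ((T i).card : ℝ) = ρ i * s)
    (hα : ∀ i ∈ Finset.Icc 1 N, (((T i) ∩ T₀).card : ℝ) = α i * (ρ i * s))
    (w : ℕ → ℝ) (hw1 : w 1 ≤ 1) (hwN : 0 ≤ w N)
    (hwmono : ∀ i j, 1 ≤ i → i ≤ j → j ≤ N → w j ≤ w i)
    (a : ℝ) (ha : 1 < a) (as : ℕ) (has : 0 < as) (hasval : (as : ℝ) = a * s)
    (hsum : ∑ i ∈ Finset.Icc 1 N, ρ i * (1 - α i) ≤ a)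
    (A : Matrix (Fin m) (Fin n) ℝ) (δas δa1s : ℝ)
    (hδas0 : 0 ≤ δas) (hδas1 : δas < 1) (hδa1s0 : 0 ≤ δa1s) (hδa1s1 : δa1s < 1)
    (hRIP1 : RIPBound A δas as) (hRIP2 : RIPBound A δa1s (as + s))
    (hcond : δas + (a / (KN N w ρ α) ^ 2) * δa1s < a / (KN N w ρ α) ^ 2 - 1)
    (z : Fin m → ℝ) (ε : ℝ) (hz : nrm2 z ≤ ε)
    (y : Fin m → ℝ) (hy : y = A.mulVec x + z)
    (xh : Fin n → ℝ) (hfeas : nrm2 (A.mulVec xh - y) ≤ ε)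
    (hmin : wl1 N T w xh ≤ wl1 N T w x) :
    nrm2 (xh - x) ≤
      2 * (1 + KN N w ρ α / Real.sqrt a) /
          (Real.sqrt (1 - δa1s) - KN N w ρ α / Real.sqrt a * Real.sqrt (1 + δas)) * ε +
      2 / Real.sqrt a * (Real.sqrt (1 - δa1s) + Real.sqrt (1 + δas)) /
          (Real.sqrt (1 - δa1s) - KN N w ρ α / Real.sqrt a * Real.sqrt (1 + δas)) *
        (Real.sqrt (s : ℝ))⁻¹ *
        ((∑ i ∈ Finset.Icc 1 N, w i) * nrm1 (restr x T₀ᶜ) +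
          (1 - ∑ i ∈ Finset.Icc 1 N, w i) *
            nrm1 (restr x (((Finset.Icc 1 N).biUnion T)ᶜ ∩ T₀ᶜ)) -
          ∑ i ∈ Finset.Icc 1 N, (∑ j ∈ (Finset.Icc 1 N).erase i, w j) *
            nrm1 (restr x (T i ∩ T₀ᶜ))) := by
  classical
  -- abbreviations
  set hv : Fin n → ℝ := xh - x with hhv
  set K : ℝ := KN N w ρ α with hK
  set TT : Finset (Fin n) := (Finset.Icc 1 N).biUnion T with hTT
  -- numeric basics
  have hs' : (0:ℝ) < s := by exact_mod_cast hs
  have ha0 : (0:ℝ) < a := lt_trans one_pos ha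
  have has' : (0:ℝ) < (as:ℝ) := by exact_mod_cast has
  have hsqs : (0:ℝ) < Real.sqrt s := Real.sqrt_pos.2 hs'
  have hsqa : (0:ℝ) < Real.sqrt a := Real.sqrt_pos.2 ha0
  have hsqas : (0:ℝ) < Real.sqrt (as:ℝ) := Real.sqrt_pos.2 has'
  have hsq_as : Real.sqrt ((as:ℕ):ℝ) = Real.sqrt a * Real.sqrt s := by
    rw [hasval, Real.sqrt_mul (le_of_lt ha0)]
  have hd0 : (0:ℝ) < Real.sqrt (1 - δa1s) := Real.sqrt_pos.2 (by linarith)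
  have he0 : (0:ℝ) < Real.sqrt (1 + δas) := Real.sqrt_pos.2 (by linarith)
  have he1 : (1:ℝ) ≤ Real.sqrt (1 + δas) := by
    calc (1:ℝ) = Real.sqrt 1 := by rw [Real.sqrt_one]
      _ ≤ Real.sqrt (1 + δas) := Real.sqrt_le_sqrt (by linarith)
  set d : ℝ := Real.sqrt (1 - δa1s) with hd
  set e : ℝ := Real.sqrt (1 + δas) with he
  -- weights
  have hwk0 : ∀ k ∈ Finset.Icc 1 N, 0 ≤ w k := by
    intro k hk
    rw [Finset.mem_Icc] at hk
    exact le_trans hwN (hwmono k N hk.1 hk.2 le_rfl)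
  have hwk1 : ∀ k ∈ Finset.Icc 1 N, w k ≤ 1 := by
    intro k hk
    rw [Finset.mem_Icc] at hk
    exact le_trans (hwmono 1 k le_rfl hk.1 hk.2) hw1
  -- the coefficient sequence
  set cc : ℕ → ℝ := fun j => if j = 1 then 1 - w 1 else w (j - 1) - w j with hcc
  have hcc0 : ∀ j ∈ Finset.Icc 1 N, 0 ≤ cc j := by
    intro j hj
    rw [Finset.mem_Icc] at hj
    by_cases hj1 : j = 1
    · simp only [hcc, if_pos hj1]; linarith
    · have h2 : 2 ≤ j := by omega
      simp only [hcc, if_neg hj1]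
      have := hwmono (j-1) j (by omega) (by omega) hj.2
      linarith
  have tel : ∀ p, 1 ≤ p → ∀ q, p ≤ q → ∑ j ∈ Finset.Icc (p+1) q, cc j = w p - w q := by
    intro p hp q hq
    induction q, hq using Nat.le_induction with
    | base =>
      rw [Finset.Icc_eq_empty (by omega)]
      simp
    | succ q hq ih =>
      rw [Finset.sum_Icc_succ_top (by omega), ih]
      have hccq : cc (q+1) = w q - w (q+1) := by
        simp only [hcc, if_neg (by omega : ¬ q + 1 = 1), Nat.add_sub_cancel]
      rw [hccq]; ring
  have tel1 : ∀ k, 1 ≤ k → ∑ j ∈ Finset.Icc 1 k, cc j = 1 - w k := by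
    intro k hk
    have hsplit : Finset.Icc 1 k = insert 1 (Finset.Icc 2 k) := by
      ext j; simp only [Finset.mem_Icc, Finset.mem_insert]; omega
    rw [hsplit, Finset.sum_insert (by simp [Finset.mem_Icc])]
    have h2 : (Finset.Icc 2 k) = Finset.Icc (1+1) k := rfl
    rw [h2, tel 1 le_rfl k hk]
    simp [hcc]
  have hKeq : K = w N + ∑ j ∈ Finset.Icc 1 N, cc j *
      Real.sqrt (1 + ∑ i ∈ Finset.Icc j N, (ρ i - 2 * α i * ρ i)) := by
    rw [hK]
    unfold KN
    have hsplit : Finset.Icc 1 N = insert 1 (Finset.Icc 2 N) := by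
      ext j; simp only [Finset.mem_Icc, Finset.mem_insert]; omega
    have h2 : ∀ j ∈ Finset.Icc 2 N, cc j *
        Real.sqrt (1 + ∑ i ∈ Finset.Icc j N, (ρ i - 2 * α i * ρ i)) =
        (w (j-1) - w j) * Real.sqrt (1 + ∑ i ∈ Finset.Icc j N, (ρ i - 2 * α i * ρ i)) := by
      intro j hj
      rw [Finset.mem_Icc] at hj
      simp only [hcc, if_neg (by omega : ¬ j = 1)]
    have hstep : ∑ j ∈ Finset.Icc 1 N, cc j *
        Real.sqrt (1 + ∑ i ∈ Finset.Icc j N, (ρ i - 2 * α i * ρ i))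
        = (1 - w 1) * Real.sqrt (1 + ∑ i ∈ Finset.Icc 1 N, (ρ i - 2 * α i * ρ i)) +
          ∑ j ∈ Finset.Icc 2 N, (w (j-1) - w j) *
            Real.sqrt (1 + ∑ i ∈ Finset.Icc j N, (ρ i - 2 * α i * ρ i)) := by
      conv_lhs => rw [hsplit]
      rw [Finset.sum_insert (by simp [Finset.mem_Icc]), Finset.sum_congr rfl h2]
      simp [hcc]
    rw [hstep]
    ring
  have hK0 : 0 ≤ K := by
    rw [hKeq]
    have : 0 ≤ ∑ j ∈ Finset.Icc 1 N, cc j *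
        Real.sqrt (1 + ∑ i ∈ Finset.Icc j N, (ρ i - 2 * α i * ρ i)) :=
      Finset.sum_nonneg fun j hj => mul_nonneg (hcc0 j hj) (Real.sqrt_nonneg _)
    linarith
  have hKpos : 0 < K := by
    rcases eq_or_lt_of_le hK0 with hK0' | h
    · exfalso
      rw [← hK0'] at hcond
      norm_num at hcond
      linarith
    · exact h
  have hden : K / Real.sqrt a * e < d := by
    have hK2 : (0:ℝ) < K^2 := by positivity
    have h2 : (δas + a / K ^ 2 * δa1s) * K^2 < (a / K ^ 2 - 1) * K^2 :=
      mul_lt_mul_of_pos_right hcond hK2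
    have e1 : (δas + a / K ^ 2 * δa1s) * K^2 = δas*K^2 + a*δa1s := by
      field_simp
    have e2 : (a / K ^ 2 - 1) * K^2 = a - K^2 := by
      field_simp
    have hKsq : K^2 * (1 + δas) < a * (1 - δa1s) := by
      rw [e1, e2] at h2; nlinarith
    have h3 : K * e < Real.sqrt a * d := by
      have l : K * e = Real.sqrt (K^2*(1+δas)) := by
        rw [Real.sqrt_mul (sq_nonneg K), Real.sqrt_sq hK0]
      have r : Real.sqrt a * d = Real.sqrt (a*(1-δa1s)) := by
        rw [Real.sqrt_mul (le_of_lt ha0)]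
      rw [l, r]
      exact Real.sqrt_lt_sqrt (by positivity) hKsq
    rw [div_mul_eq_mul_div, div_lt_iff₀ hsqa]
    linarith [h3]
  -- the weight profile u
  set u : Fin n → ℝ := fun i =>
    (∑ k ∈ Finset.Icc 1 N, if i ∈ T k then w k else 0) + (if i ∈ TT then 0 else 1) with hu
  have hu_mem : ∀ k ∈ Finset.Icc 1 N, ∀ i ∈ T k, u i = w k := by
    intro k hk i hi
    have hiTT : i ∈ TT := Finset.mem_biUnion.2 ⟨k, hk, hi⟩
    simp only [hu, if_pos hiTT, add_zero]
    rw [Finset.sum_eq_single_of_mem k hk]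
    · rw [if_pos hi]
    · intro k' hk' hne
      have hnot : i ∉ T k' := fun hi' =>
        (Finset.disjoint_left.1 (hdisj k' hk' k hk hne) hi') hi
      rw [if_neg hnot]
  have hu_one : ∀ i, i ∉ TT → u i = 1 := by
    intro i hiTT
    simp only [hu, if_neg hiTT]
    rw [Finset.sum_eq_zero, zero_add]
    intro k hk
    exact if_neg fun hi => hiTT (Finset.mem_biUnion.2 ⟨k, hk, hi⟩)
  have hu0 : ∀ i, 0 ≤ u i := by
    intro i
    by_cases hiTT : i ∈ TT
    · obtain ⟨k, hk, hik⟩ := Finset.mem_biUnion.1 hiTT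
      rw [hu_mem k hk i hik]; exact hwk0 k hk
    · rw [hu_one i hiTT]; norm_num
  have hu1 : ∀ i, u i ≤ 1 := by
    intro i
    by_cases hiTT : i ∈ TT
    · obtain ⟨k, hk, hik⟩ := Finset.mem_biUnion.1 hiTT
      rw [hu_mem k hk i hik]; exact hwk1 k hk
    · rw [hu_one i hiTT]
  -- wl1 as a single weighted sum
  have hwl1 : ∀ v : Fin n → ℝ, wl1 N T w v = ∑ i, u i * |v i| := by
    intro v
    unfold wl1
    rw [← hTT]
    have hA : ∀ k, w k * nrm1 (restr v (T k)) =
        ∑ i, w k * (if i ∈ T k then |v i| else 0) := by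
      intro k
      rw [nrm1_restr, Finset.mul_sum]
      rw [← Finset.sum_subset (Finset.subset_univ (T k))
        (by intro i _ hi; rw [if_neg hi, mul_zero])]
      exact Finset.sum_congr rfl fun i hi => by rw [if_pos hi]
    have hB : nrm1 (restr v TTᶜ) = ∑ i, (if i ∈ TT then 0 else |v i|) := by
      rw [nrm1_restr]
      rw [← Finset.sum_subset (Finset.subset_univ TTᶜ)
        (by intro i _ hi; rw [if_pos (by simpa using hi)])]
      exact Finset.sum_congr rfl fun i hi => by rw [if_neg (Finset.mem_compl.1 hi)]
    have key : ∀ i, (∑ k ∈ Finset.Icc 1 N, w k * (if i ∈ T k then |v i| else 0)) +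
        (if i ∈ TT then 0 else |v i|) = u i * |v i| := by
      intro i
      simp only [hu]
      rw [add_mul, Finset.sum_mul]
      congr 1
      · exact Finset.sum_congr rfl fun k _ => by by_cases hik : i ∈ T k <;> simp [hik]
      · by_cases hiTT : i ∈ TT <;> simp [hiTT]
    rw [Finset.sum_congr rfl (fun k _ => hA k), hB, Finset.sum_comm,
      ← Finset.sum_add_distrib]
    exact Finset.sum_congr rfl fun i _ => key i
  have hsum_u : ∑ i, u i * |xh i| ≤ ∑ i, u i * |x i| := by
    have := hmin
    rwa [hwl1 xh, hwl1 x] at this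
  have hxh : ∀ i, xh i = x i + hv i := by
    intro i; simp [hhv]
  -- cone base inequality
  have hcone0 : ∑ i ∈ T₀ᶜ, u i * |hv i| ≤
      ∑ i ∈ T₀, u i * |hv i| + 2 * ∑ i ∈ T₀ᶜ, u i * |x i| := by
    have h1 : ∀ i ∈ T₀, u i * |x i| - u i * |hv i| ≤ u i * |xh i| := by
      intro i _
      have habs : |x i| - |hv i| ≤ |xh i| := by
        have : |x i| ≤ |xh i| + |hv i| := by
          calc |x i| = |xh i - hv i| := by rw [hxh i]; ring_nf
            _ ≤ |xh i| + |hv i| := abs_sub _ _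
        linarith
      have h2 := mul_le_mul_of_nonneg_left habs (hu0 i)
      rw [mul_sub] at h2
      linarith
    have h2 : ∀ i ∈ T₀ᶜ, u i * |hv i| - u i * |x i| ≤ u i * |xh i| := by
      intro i _
      have habs : |hv i| - |x i| ≤ |xh i| := by
        have : |hv i| ≤ |xh i| + |x i| := by
          calc |hv i| = |xh i - x i| := by rw [hhv]; simp
            _ ≤ |xh i| + |x i| := abs_sub _ _
        linarith
      have h3 := mul_le_mul_of_nonneg_left habs (hu0 i)
      rw [mul_sub] at h3
      linarith
    have hS := hsum_u
    rw [← Finset.sum_add_sum_compl T₀ (fun i => u i * |xh i|)] at hS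
    rw [← Finset.sum_add_sum_compl T₀ (fun i => u i * |x i|)] at hS
    have hA := Finset.sum_le_sum h1
    have hB := Finset.sum_le_sum h2
    rw [Finset.sum_sub_distrib] at hA hB
    linarith
  -- partition of T₀ᶜ
  have hpd : Set.PairwiseDisjoint ↑(Finset.Icc 1 N) (fun k => T k ∩ T₀ᶜ) := by
    intro k hk k' hk' hne
    exact Finset.disjoint_left.2 fun i hi hi' =>
      (Finset.disjoint_left.1 (hdisj k (Finset.mem_coe.1 hk) k' (Finset.mem_coe.1 hk') hne)
        (Finset.mem_inter.1 hi).1) (Finset.mem_inter.1 hi').1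
  have hpart : ∀ g : Fin n → ℝ, ∑ i ∈ T₀ᶜ, g i =
      (∑ k ∈ Finset.Icc 1 N, ∑ i ∈ T k ∩ T₀ᶜ, g i) + ∑ i ∈ TTᶜ ∩ T₀ᶜ, g i := by
    intro g
    have hU : (Finset.Icc 1 N).biUnion (fun k => T k ∩ T₀ᶜ) ∪ (TTᶜ ∩ T₀ᶜ) = T₀ᶜ := by
      ext i
      simp only [Finset.mem_union, Finset.mem_biUnion, Finset.mem_inter, Finset.mem_compl,
        hTT, Finset.mem_biUnion]
      constructor
      · rintro (⟨k, hk, hik, hic⟩ | ⟨_, hic⟩) <;> exact hic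
      · intro hic
        by_cases hiT : ∃ k ∈ Finset.Icc 1 N, i ∈ T k
        · obtain ⟨k, hk, hik⟩ := hiT; exact Or.inl ⟨k, hk, hik, hic⟩
        · exact Or.inr ⟨hiT, hic⟩
    have hdisjU : Disjoint ((Finset.Icc 1 N).biUnion (fun k => T k ∩ T₀ᶜ)) (TTᶜ ∩ T₀ᶜ) := by
      refine Finset.disjoint_left.2 fun i hi hi' => ?_
      obtain ⟨k, hk, hik⟩ := Finset.mem_biUnion.1 hi
      exact (Finset.mem_compl.1 (Finset.mem_inter.1 hi').1)
        (Finset.mem_biUnion.2 ⟨k, hk, (Finset.mem_inter.1 hik).1⟩)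
    conv_lhs => rw [← hU]
    rw [Finset.sum_union hdisjU, Finset.sum_biUnion hpd]
  have hDt_eq : ∑ i ∈ T₀ᶜ, u i * |x i| =
      (∑ k ∈ Finset.Icc 1 N, w k * nrm1 (restr x (T k ∩ T₀ᶜ))) +
        nrm1 (restr x (TTᶜ ∩ T₀ᶜ)) := by
    rw [hpart (fun i => u i * |x i|)]
    congr 1
    · refine Finset.sum_congr rfl fun k hk => ?_
      rw [nrm1_restr, Finset.mul_sum]
      refine Finset.sum_congr rfl fun i hi => ?_
      rw [hu_mem k hk i (Finset.mem_inter.1 hi).1]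
    · rw [nrm1_restr]
      refine Finset.sum_congr rfl fun i hi => ?_
      rw [hu_one i (Finset.mem_compl.1 (Finset.mem_inter.1 hi).1), one_mul]
  have hx_split : nrm1 (restr x T₀ᶜ) =
      (∑ k ∈ Finset.Icc 1 N, nrm1 (restr x (T k ∩ T₀ᶜ))) + nrm1 (restr x (TTᶜ ∩ T₀ᶜ)) := by
    rw [nrm1_restr, hpart (fun i => |x i|)]
    congr 1
    · exact Finset.sum_congr rfl fun k _ => (nrm1_restr x _).symm
    · exact (nrm1_restr x _).symm
  have hDg : (∑ i ∈ Finset.Icc 1 N, w i) * nrm1 (restr x T₀ᶜ) +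
      (1 - ∑ i ∈ Finset.Icc 1 N, w i) * nrm1 (restr x (TTᶜ ∩ T₀ᶜ)) -
      ∑ i ∈ Finset.Icc 1 N, (∑ j ∈ (Finset.Icc 1 N).erase i, w j) *
        nrm1 (restr x (T i ∩ T₀ᶜ)) = ∑ i ∈ T₀ᶜ, u i * |x i| := by
    have herase : ∑ i ∈ Finset.Icc 1 N, (∑ j ∈ (Finset.Icc 1 N).erase i, w j) *
        nrm1 (restr x (T i ∩ T₀ᶜ)) =
        (∑ j ∈ Finset.Icc 1 N, w j) * (∑ k ∈ Finset.Icc 1 N, nrm1 (restr x (T k ∩ T₀ᶜ))) -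
        ∑ k ∈ Finset.Icc 1 N, w k * nrm1 (restr x (T k ∩ T₀ᶜ)) := by
      rw [Finset.mul_sum, ← Finset.sum_sub_distrib]
      refine Finset.sum_congr rfl fun k hk => ?_
      rw [Finset.sum_erase_eq_sub hk, sub_mul]
    rw [herase, hDt_eq, hx_split]
    ring
  set Dt : ℝ := ∑ i ∈ T₀ᶜ, u i * |x i| with hDt
  have hDt0 : 0 ≤ Dt :=
    Finset.sum_nonneg fun i _ => mul_nonneg (hu0 i) (abs_nonneg _)
  -- cardinality facts for the sets S_j
  have hcards : ∀ j ∈ Finset.Icc 1 N, ((SS N T T₀ j).card : ℝ) =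
      s * (1 + ∑ i ∈ Finset.Icc j N, (ρ i - 2 * α i * ρ i)) := by
    intro j hj
    rw [Finset.mem_Icc] at hj
    have hIccsub : Finset.Icc j N ⊆ Finset.Icc 1 N := Finset.Icc_subset_Icc hj.1 le_rfl
    set B := (Finset.Icc j N).biUnion T with hB
    set B' := (Finset.Icc j N).biUnion (fun i => T i ∩ T₀) with hB'
    have hBcard : (B.card : ℝ) = ∑ k ∈ Finset.Icc j N, (ρ k * s) := by
      rw [hB, Finset.card_biUnion
        (fun k hk k' hk' hne => hdisj k (hIccsub hk) k' (hIccsub hk') hne)]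
      push_cast
      exact Finset.sum_congr rfl fun k hk => hρ k (hIccsub hk)
    have hB'card : (B'.card : ℝ) = ∑ k ∈ Finset.Icc j N, (α k * (ρ k * s)) := by
      rw [hB', Finset.card_biUnion (fun k hk k' hk' hne =>
        Finset.disjoint_left.2 fun i hi hi' =>
          (Finset.disjoint_left.1 (hdisj k (hIccsub hk) k' (hIccsub hk') hne)
            (Finset.mem_inter.1 hi).1) (Finset.mem_inter.1 hi').1)]
      push_cast
      exact Finset.sum_congr rfl fun k hk => hα k (hIccsub hk)
    have hB'sub : B' ⊆ T₀ ∪ B := by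
      intro i hi
      obtain ⟨k, hk, hik⟩ := Finset.mem_biUnion.1 hi
      exact Finset.mem_union.2 (Or.inl (Finset.mem_inter.1 hik).2)
    have hTB : T₀ ∩ B = B' := by
      ext i
      simp only [hB, hB', Finset.mem_inter, Finset.mem_biUnion]
      constructor
      · rintro ⟨hi0, k, hk, hik⟩; exact ⟨k, hk, hik, hi0⟩
      · rintro ⟨k, hk, hik, hi0⟩
        exact ⟨hi0, k, hk, hik⟩
    have hU : ((T₀ ∪ B).card : ℝ) = s + B.card - B'.card := by
      have h := Finset.card_union_add_card_inter T₀ B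
      rw [hTB] at h
      have h' : ((T₀ ∪ B).card : ℝ) + B'.card = T₀.card + B.card := by exact_mod_cast h
      rw [hT₀card] at h'
      linarith
    have hSScard : ((SS N T T₀ j).card : ℝ) = ((T₀ ∪ B).card : ℝ) - B'.card := by
      have : SS N T T₀ j = (T₀ ∪ B) \ B' := rfl
      rw [this, Finset.cast_card_sdiff hB'sub]
    have hsum_eq : (∑ k ∈ Finset.Icc j N, (ρ k * (s:ℝ))) -
        2 * ∑ k ∈ Finset.Icc j N, (α k * (ρ k * s)) =
        s * ∑ i ∈ Finset.Icc j N, (ρ i - 2 * α i * ρ i) := by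
      rw [Finset.mul_sum, Finset.mul_sum, ← Finset.sum_sub_distrib]
      exact Finset.sum_congr rfl fun k _ => by ring
    rw [hSScard, hU, hBcard, hB'card]
    linarith
  have hcardV : ∀ j ∈ Finset.Icc 1 N, (((SS N T T₀ j) \ T₀).card : ℝ) ≤ (as:ℝ) := by
    intro j hj
    rw [Finset.mem_Icc] at hj
    have hIccsub : Finset.Icc j N ⊆ Finset.Icc 1 N := Finset.Icc_subset_Icc hj.1 le_rfl
    have hsub : (SS N T T₀ j) \ T₀ ⊆ (Finset.Icc j N).biUnion (fun k => T k \ T₀) := by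
      intro i hi
      rw [Finset.mem_sdiff] at hi
      obtain ⟨hiSS, hiT0⟩ := hi
      have : i ∈ T₀ ∪ (Finset.Icc j N).biUnion T := (Finset.mem_sdiff.1 hiSS).1
      rcases Finset.mem_union.1 this with h0 | hB
      · exact absurd h0 hiT0
      · obtain ⟨k, hk, hik⟩ := Finset.mem_biUnion.1 hB
        exact Finset.mem_biUnion.2 ⟨k, hk, Finset.mem_sdiff.2 ⟨hik, hiT0⟩⟩
    have h1 : ((SS N T T₀ j) \ T₀).card ≤ ∑ k ∈ Finset.Icc j N, (T k \ T₀).card :=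
      le_trans (Finset.card_le_card hsub) (Finset.card_biUnion_le)
    have h2 : ∑ k ∈ Finset.Icc j N, (T k \ T₀).card ≤
        ∑ k ∈ Finset.Icc 1 N, (T k \ T₀).card :=
      Finset.sum_le_sum_of_subset hIccsub
    have h3 : ((∑ k ∈ Finset.Icc 1 N, (T k \ T₀).card : ℕ) : ℝ) =
        ∑ k ∈ Finset.Icc 1 N, (ρ k * s - α k * (ρ k * s)) := by
      push_cast
      refine Finset.sum_congr rfl fun k hk => ?_
      have h4 := Finset.card_sdiff_add_card_inter (T k) T₀
      have h5 : ((T k \ T₀).card : ℝ) + ((T k ∩ T₀).card : ℝ) = (T k).card := by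
        exact_mod_cast h4
      rw [hρ k hk, hα k hk] at h5
      linarith
    have h6 : ∑ k ∈ Finset.Icc 1 N, (ρ k * (s:ℝ) - α k * (ρ k * s)) =
        (∑ i ∈ Finset.Icc 1 N, ρ i * (1 - α i)) * s := by
      rw [Finset.sum_mul]
      exact Finset.sum_congr rfl fun k _ => by ring
    have h7 : (∑ i ∈ Finset.Icc 1 N, ρ i * (1 - α i)) * s ≤ a * s :=
      mul_le_mul_of_nonneg_right hsum (le_of_lt hs')
    calc (((SS N T T₀ j) \ T₀).card : ℝ)
        ≤ ((∑ k ∈ Finset.Icc 1 N, (T k \ T₀).card : ℕ) : ℝ) := by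
          exact_mod_cast le_trans h1 h2
      _ = ∑ k ∈ Finset.Icc 1 N, (ρ k * s - α k * (ρ k * s)) := h3
      _ ≤ a * s := by rw [h6] at *; exact h7
      _ = (as:ℝ) := hasval.symm
  -- construction of the top set T1
  obtain ⟨T1, hT1sub, hT1card, htop⟩ :=
    exists_top_subset hv T₀ᶜ (min as T₀ᶜ.card) (min_le_right _ _)
  set W : Finset (Fin n) := T₀ᶜ \ T1 with hW
  have hT1le : T1.card ≤ as := le_trans (le_of_eq hT1card) (min_le_left _ _)
  have hUnionCard : (T₀ ∪ T1).card ≤ as + s := by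
    calc (T₀ ∪ T1).card ≤ T₀.card + T1.card := Finset.card_union_le _ _
      _ ≤ as + s := by omega
  have hbex : ∃ b : ℝ, 0 ≤ b ∧ (∀ i ∈ W, |hv i| ≤ b) ∧
      (as:ℝ) * b ≤ nrm1 (restr hv T1) := by
    by_cases hcs : as ≤ T₀ᶜ.card
    · have hT1c : T1.card = as := by rw [hT1card]; exact min_eq_left hcs
      have hT1ne : T1.Nonempty := Finset.card_pos.1 (by omega)
      obtain ⟨j0, hj0, hmin'⟩ := Finset.exists_min_image T1 (fun i => |hv i|) hT1ne
      refine ⟨|hv j0|, abs_nonneg _, fun i hi => htop i hi j0 hj0, ?_⟩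
      rw [nrm1_restr]
      calc (as:ℝ) * |hv j0| = ∑ _i ∈ T1, |hv j0| := by
            rw [Finset.sum_const, nsmul_eq_mul, hT1c]
        _ ≤ ∑ i ∈ T1, |hv i| := Finset.sum_le_sum fun i hi => hmin' i hi
    · push_neg at hcs
      have hT1eq : T1 = T₀ᶜ := Finset.eq_of_subset_of_card_le hT1sub
        (by rw [hT1card]; exact le_of_eq (min_eq_right (le_of_lt hcs)).symm)
      refine ⟨0, le_rfl, ?_, by rw [mul_zero]; exact nrm1_restr_nonneg _ _⟩
      intro i hi
      rw [hW, hT1eq, Finset.sdiff_self] at hi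
      exact absurd hi (Finset.notMem_empty i)
  obtain ⟨b, hb0, hbd, hasb⟩ := hbex
  have hVle : ∀ V : Finset (Fin n), V ⊆ T₀ᶜ → ((V.card:ℝ) ≤ (as:ℝ)) →
      ∑ i ∈ V, (hv i)^2 ≤ ∑ i ∈ T1, (hv i)^2 := by
    intro V hVsub hVc
    refine top_subset_sq_sum_le hv hT1sub htop hVsub ?_
    rw [hT1card]
    have h1 : V.card ≤ as := by exact_mod_cast hVc
    exact le_min h1 (Finset.card_le_card hVsub)
  set P : ℝ := nrm2 (restr hv (T₀ ∪ T1)) with hP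
  set Q : ℝ := (Real.sqrt ((as:ℕ):ℝ))⁻¹ * nrm1 (restr hv T₀ᶜ) with hQdef
  have hP0 : 0 ≤ P := nrm2_nonneg _
  have hQ0 : 0 ≤ Q := mul_nonneg (by positivity) (nrm1_restr_nonneg _ _)
  have hn1split : nrm1 (restr hv T1) + nrm1 (restr hv W) = nrm1 (restr hv T₀ᶜ) := by
    rw [nrm1_restr, nrm1_restr, nrm1_restr, ← Finset.sum_union Finset.disjoint_sdiff,
      Finset.union_sdiff_of_subset hT1sub]
  have hsqb : Real.sqrt ((as:ℕ):ℝ) * b ≤ (Real.sqrt ((as:ℕ):ℝ))⁻¹ * nrm1 (restr hv T1) := by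
    have h2 : Real.sqrt ((as:ℕ):ℝ) * b = (Real.sqrt ((as:ℕ):ℝ))⁻¹ * ((as:ℝ) * b) := by
      rw [← Real.mul_self_sqrt (le_of_lt has')]
      field_simp
      rw [Real.sqrt_sq hsqas.le]
    rw [h2]
    exact mul_le_mul_of_nonneg_left hasb (by positivity)
  have hchunkgen : ∀ (F : (Fin n → ℝ) → ℝ), (∀ f g, F (f+g) ≤ F f + F g) →
      ∀ e' : ℝ, 0 ≤ e' →
      (∀ S : Finset (Fin n), S.card ≤ as → F (restr hv S) ≤ e' * nrm2 (restr hv S)) →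
      F (restr hv W) ≤ e' * Q := by
    intro F hFadd e' he' hFb
    have h1 := chunk_bound hv as has F hFadd e' he' hFb W b hb0 hbd
    calc F (restr hv W)
        ≤ e' * (Real.sqrt ((as:ℕ):ℝ) * b + (Real.sqrt ((as:ℕ):ℝ))⁻¹ * nrm1 (restr hv W)) := h1
      _ ≤ e' * ((Real.sqrt ((as:ℕ):ℝ))⁻¹ * nrm1 (restr hv T1) +
            (Real.sqrt ((as:ℕ):ℝ))⁻¹ * nrm1 (restr hv W)) :=
          mul_le_mul_of_nonneg_left (add_le_add hsqb le_rfl) he'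
      _ = e' * Q := by rw [hQdef, ← hn1split]; ring
  -- RIP consequences
  have hsupp : ∀ (S : Finset (Fin n)),
      (Finset.univ.filter fun i => restr hv S i ≠ 0).card ≤ S.card := by
    intro S
    apply Finset.card_le_card
    intro i hi
    rw [Finset.mem_filter] at hi
    by_contra hiS
    exact hi.2 (by simp [restr, hiS])
  have hRIPup : ∀ S : Finset (Fin n), S.card ≤ as →
      nrm2 (A.mulVec (restr hv S)) ≤ e * nrm2 (restr hv S) := by
    intro S hS
    have h1 := (hRIP1 (restr hv S) (le_trans (hsupp S) hS)).2
    calc nrm2 (A.mulVec (restr hv S))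
        = Real.sqrt ((nrm2 (A.mulVec (restr hv S)))^2) :=
          (Real.sqrt_sq (nrm2_nonneg _)).symm
      _ ≤ Real.sqrt ((1 + δas) * (nrm2 (restr hv S))^2) := Real.sqrt_le_sqrt h1
      _ = e * nrm2 (restr hv S) := by
          rw [Real.sqrt_mul (by linarith), Real.sqrt_sq (nrm2_nonneg _), he]
  have hRIPlow : d * P ≤ nrm2 (A.mulVec (restr hv (T₀ ∪ T1))) := by
    have h1 := (hRIP2 (restr hv (T₀ ∪ T1)) (le_trans (hsupp _) hUnionCard)).1
    calc d * P = Real.sqrt ((1 - δa1s) * P^2) := by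
          rw [Real.sqrt_mul (by linarith), Real.sqrt_sq hP0, hd]
      _ ≤ Real.sqrt ((nrm2 (A.mulVec (restr hv (T₀ ∪ T1))))^2) := Real.sqrt_le_sqrt h1
      _ = nrm2 (A.mulVec (restr hv (T₀ ∪ T1))) := Real.sqrt_sq (nrm2_nonneg _)
  -- decomposition of hv
  have hdisj2 : Disjoint (T₀ ∪ T1) W := by
    refine Finset.disjoint_left.2 fun i hi hi' => ?_
    rw [hW, Finset.mem_sdiff] at hi'
    rcases Finset.mem_union.1 hi with h0 | h1'
    · exact (Finset.mem_compl.1 hi'.1) h0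
    · exact hi'.2 h1'
  have huniv : (T₀ ∪ T1) ∪ W = Finset.univ := by
    ext i
    simp only [Finset.mem_union, Finset.mem_sdiff, Finset.mem_compl, Finset.mem_univ,
      iff_true, hW, Finset.mem_sdiff, Finset.mem_compl]
    by_cases h0 : i ∈ T₀
    · exact Or.inl (Or.inl h0)
    · by_cases h1' : i ∈ T1
      · exact Or.inl (Or.inr h1')
      · exact Or.inr ⟨h0, h1'⟩
  have hsplitv : restr hv (T₀ ∪ T1) + restr hv W = hv := by
    rw [← restr_union hdisj2, huniv]
    funext i
    simp [restr]
  have hε0 : 0 ≤ ε := le_trans (nrm2_nonneg z) hz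
  have hHPQ : nrm2 hv ≤ P + Q := by
    have h1 : nrm2 hv ≤ P + nrm2 (restr hv W) := by
      calc nrm2 hv = nrm2 (restr hv (T₀ ∪ T1) + restr hv W) := by rw [hsplitv]
        _ ≤ P + nrm2 (restr hv W) := nrm2_triangle _ _
    have h2 : nrm2 (restr hv W) ≤ 1 * Q :=
      hchunkgen nrm2 nrm2_triangle 1 one_pos.le (fun S _ => by rw [one_mul])
    linarith
  have hAh2ε : nrm2 (A.mulVec hv) ≤ 2*ε := by
    have h1 : A.mulVec hv = (A.mulVec xh - y) + z := by
      rw [hhv, Matrix.mulVec_sub, hy]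
      funext j
      simp only [Pi.sub_apply, Pi.add_apply]
      ring
    rw [h1]
    calc nrm2 ((A.mulVec xh - y) + z) ≤ nrm2 (A.mulVec xh - y) + nrm2 z := nrm2_triangle _ _
      _ ≤ ε + ε := add_le_add hfeas hz
      _ = 2*ε := by ring
  have hdP : d * P ≤ 2*ε + e * Q := by
    have h1 : nrm2 (A.mulVec (restr hv (T₀ ∪ T1))) ≤
        nrm2 (A.mulVec hv) + nrm2 (A.mulVec (restr hv W)) := by
      have heq2 : restr hv (T₀ ∪ T1) = hv - restr hv W := by
        funext i
        have hco := congrFun hsplitv i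
        simp only [Pi.add_apply] at hco
        simp only [Pi.sub_apply]
        linarith
      rw [heq2, Matrix.mulVec_sub]
      exact nrm2_sub_le _ _
    have h2 : nrm2 (A.mulVec (restr hv W)) ≤ e * Q :=
      hchunkgen (fun f => nrm2 (A.mulVec f))
        (fun f g => by
          show nrm2 (A.mulVec (f+g)) ≤ nrm2 (A.mulVec f) + nrm2 (A.mulVec g)
          rw [Matrix.mulVec_add]; exact nrm2_triangle _ _)
        e he0.le hRIPup
    linarith [hRIPlow]
  -- membership in S_j
  have hmemSS : ∀ (j : ℕ) (i : Fin n), i ∈ SS N T T₀ j ↔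
      ((i ∈ T₀ ∨ ∃ k ∈ Finset.Icc j N, i ∈ T k) ∧
        ¬ ∃ k ∈ Finset.Icc j N, i ∈ T k ∧ i ∈ T₀) := by
    intro j i
    unfold SS
    rw [Finset.mem_sdiff, Finset.mem_union, Finset.mem_biUnion, Finset.mem_biUnion]
    simp only [Finset.mem_inter]
  -- pointwise coefficient inequality
  have hpt : ∀ i : Fin n, (if i ∈ T₀ then u i else 1 - u i) ≤
      w N * (if i ∈ T₀ then 1 else 0) +
      ∑ j ∈ Finset.Icc 1 N, cc j * (if i ∈ SS N T T₀ j then 1 else 0) := by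
    intro i
    have hindnn : (0:ℝ) ≤ ∑ j ∈ Finset.Icc 1 N, cc j * (if i ∈ SS N T T₀ j then 1 else 0) :=
      Finset.sum_nonneg fun j hj => mul_nonneg (hcc0 j hj) (by split <;> norm_num)
    by_cases hiTT : i ∈ TT
    · obtain ⟨k, hk, hik⟩ := Finset.mem_biUnion.1 hiTT
      have hkIcc := Finset.mem_Icc.1 hk
      have hu' := hu_mem k hk i hik
      have huniq : ∀ k', i ∈ T k' → k' ∈ Finset.Icc 1 N → k' = k := by
        intro k' hik' hk'
        by_contra hne
        exact (Finset.disjoint_left.1 (hdisj k' hk' k hk hne) hik') hik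
      by_cases hi0 : i ∈ T₀
      · have hind : ∀ j ∈ Finset.Icc 1 N, cc j * (if i ∈ SS N T T₀ j then (1:ℝ) else 0) =
            if k + 1 ≤ j then cc j else 0 := by
          intro j hj
          have hjIcc := Finset.mem_Icc.1 hj
          by_cases hkj : k + 1 ≤ j
          · rw [if_pos hkj, if_pos, mul_one]
            rw [hmemSS]
            refine ⟨Or.inl hi0, ?_⟩
            rintro ⟨k', hk', hik', _⟩
            have hk'Icc := Finset.mem_Icc.1 hk'
            have : k' = k := huniq k' hik' (Finset.mem_Icc.2 ⟨by omega, hk'Icc.2⟩)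
            omega
          · rw [if_neg hkj, if_neg, mul_zero]
            rw [hmemSS]
            rintro ⟨_, hno⟩
            exact hno ⟨k, Finset.mem_Icc.2 ⟨by omega, hkIcc.2⟩, hik, hi0⟩
        rw [if_pos hi0, if_pos hi0, hu']
        rw [Finset.sum_congr rfl hind, ← Finset.sum_filter]
        have hfe : (Finset.Icc 1 N).filter (fun j => k + 1 ≤ j) = Finset.Icc (k+1) N := by
          ext j; simp only [Finset.mem_filter, Finset.mem_Icc]; omega
        rw [hfe, tel k hkIcc.1 N hkIcc.2]
        linarith
      · have hind : ∀ j ∈ Finset.Icc 1 N, cc j * (if i ∈ SS N T T₀ j then (1:ℝ) else 0) =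
            if j ≤ k then cc j else 0 := by
          intro j hj
          have hjIcc := Finset.mem_Icc.1 hj
          by_cases hkj : j ≤ k
          · rw [if_pos hkj, if_pos, mul_one]
            rw [hmemSS]
            refine ⟨Or.inr ⟨k, Finset.mem_Icc.2 ⟨hkj, hkIcc.2⟩, hik⟩, ?_⟩
            rintro ⟨k', _, _, hi0'⟩
            exact hi0 hi0'
          · rw [if_neg hkj, if_neg, mul_zero]
            rw [hmemSS]
            rintro ⟨hmem, _⟩
            rcases hmem with h0 | ⟨k', hk', hik'⟩
            · exact hi0 h0
            · have hk'Icc := Finset.mem_Icc.1 hk'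
              have : k' = k := huniq k' hik' (Finset.mem_Icc.2 ⟨by omega, hk'Icc.2⟩)
              omega
        rw [if_neg hi0, if_neg hi0, hu']
        rw [Finset.sum_congr rfl hind, ← Finset.sum_filter]
        have hfe : (Finset.Icc 1 N).filter (fun j => j ≤ k) = Finset.Icc 1 k := by
          ext j; simp only [Finset.mem_filter, Finset.mem_Icc]; omega
        rw [hfe, tel1 k hkIcc.1]
        have : 0 ≤ w N * (if i ∈ T₀ then (1:ℝ) else 0) :=
          mul_nonneg hwN (by split <;> norm_num)
        linarith
    · have hu' := hu_one i hiTT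
      by_cases hi0 : i ∈ T₀
      · have hind : ∀ j ∈ Finset.Icc 1 N, cc j * (if i ∈ SS N T T₀ j then (1:ℝ) else 0) =
            cc j := by
          intro j hj
          have hjIcc := Finset.mem_Icc.1 hj
          rw [if_pos, mul_one]
          rw [hmemSS]
          refine ⟨Or.inl hi0, ?_⟩
          rintro ⟨k', hk', hik', _⟩
          have hk'Icc := Finset.mem_Icc.1 hk'
          exact hiTT (Finset.mem_biUnion.2
            ⟨k', Finset.mem_Icc.2 ⟨by omega, hk'Icc.2⟩, hik'⟩)
        rw [if_pos hi0, if_pos hi0, hu']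
        rw [Finset.sum_congr rfl hind, tel1 N hN1]
        linarith
      · rw [if_neg hi0, if_neg hi0, hu']
        have : w N * (if i ∈ T₀ then (1:ℝ) else 0) = 0 := by rw [if_neg hi0, mul_zero]
        linarith
  -- summed coefficient inequality
  have hindnrm : ∀ (S : Finset (Fin n)) (co : ℝ),
      ∑ i, co * (if i ∈ S then (1:ℝ) else 0) * |hv i| = co * nrm1 (restr hv S) := by
    intro S co
    rw [nrm1_restr, Finset.mul_sum]
    rw [← Finset.sum_subset (Finset.subset_univ S)
      (by intro i _ hi; rw [if_neg hi]; ring)]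
    exact Finset.sum_congr rfl fun i hi => by rw [if_pos hi]; ring
  have hsum1 : ∑ i ∈ T₀, u i * |hv i| + ∑ i ∈ T₀ᶜ, (1 - u i) * |hv i| ≤
      w N * nrm1 (restr hv T₀) +
      ∑ j ∈ Finset.Icc 1 N, cc j * nrm1 (restr hv (SS N T T₀ j)) := by
    have hL : ∑ i ∈ T₀, u i * |hv i| + ∑ i ∈ T₀ᶜ, (1 - u i) * |hv i| =
        ∑ i, (if i ∈ T₀ then u i else 1 - u i) * |hv i| := by
      rw [← Finset.sum_add_sum_compl T₀ (fun i => (if i ∈ T₀ then u i else 1 - u i) * |hv i|)]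
      congr 1
      · exact Finset.sum_congr rfl fun i hi => by rw [if_pos hi]
      · exact Finset.sum_congr rfl fun i hi => by rw [if_neg (Finset.mem_compl.1 hi)]
    have hRHS : w N * nrm1 (restr hv T₀) +
        ∑ j ∈ Finset.Icc 1 N, cc j * nrm1 (restr hv (SS N T T₀ j)) =
        ∑ i, (w N * (if i ∈ T₀ then 1 else 0) +
          ∑ j ∈ Finset.Icc 1 N, cc j * (if i ∈ SS N T T₀ j then 1 else 0)) * |hv i| := by
      have h2 : ∀ i, (w N * (if i ∈ T₀ then (1:ℝ) else 0) +
          ∑ j ∈ Finset.Icc 1 N, cc j * (if i ∈ SS N T T₀ j then 1 else 0)) * |hv i| =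
          w N * (if i ∈ T₀ then (1:ℝ) else 0) * |hv i| +
          ∑ j ∈ Finset.Icc 1 N, cc j * (if i ∈ SS N T T₀ j then 1 else 0) * |hv i| := by
        intro i; rw [add_mul, Finset.sum_mul]
      rw [Finset.sum_congr rfl fun i _ => h2 i, Finset.sum_add_distrib]
      congr 1
      · exact (hindnrm T₀ (w N)).symm
      · rw [Finset.sum_comm]
        exact Finset.sum_congr rfl fun j _ => (hindnrm _ (cc j)).symm
    rw [hL, hRHS]
    exact Finset.sum_le_sum fun i _ => mul_le_mul_of_nonneg_right (hpt i) (abs_nonneg _)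
  -- ℓ2 bounds for the S_j
  have hdisjT01 : Disjoint T₀ T1 :=
    Finset.disjoint_left.2 fun i hi0 hi1 => (Finset.mem_compl.1 (hT1sub hi1)) hi0
  have hT0P : nrm1 (restr hv T₀) ≤ Real.sqrt s * P := by
    calc nrm1 (restr hv T₀) ≤ Real.sqrt T₀.card * nrm2 (restr hv T₀) := nrm1_le_sqrt_card hv T₀
      _ ≤ Real.sqrt s * P := by
        rw [hT₀card]
        exact mul_le_mul_of_nonneg_left
          (nrm2_restr_mono hv Finset.subset_union_left) (Real.sqrt_nonneg _)
  have hSSP : ∀ j ∈ Finset.Icc 1 N, nrm2 (restr hv (SS N T T₀ j)) ≤ P := by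
    intro j hj
    have h1 : ∑ i ∈ SS N T T₀ j, (hv i)^2 ≤ ∑ i ∈ T₀ ∪ T1, (hv i)^2 := by
      have hsp : ∑ i ∈ SS N T T₀ j ∩ T₀, (hv i)^2 + ∑ i ∈ SS N T T₀ j \ T₀, (hv i)^2 =
          ∑ i ∈ SS N T T₀ j, (hv i)^2 := Finset.sum_inter_add_sum_sdiff _ _ _
      have h2 : ∑ i ∈ SS N T T₀ j ∩ T₀, (hv i)^2 ≤ ∑ i ∈ T₀, (hv i)^2 :=
        Finset.sum_le_sum_of_subset_of_nonneg Finset.inter_subset_right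
          (fun i _ _ => sq_nonneg _)
      have h3 : ∑ i ∈ SS N T T₀ j \ T₀, (hv i)^2 ≤ ∑ i ∈ T1, (hv i)^2 :=
        hVle _ (fun i hi => Finset.mem_compl.2 (Finset.mem_sdiff.1 hi).2) (hcardV j hj)
      have h4 : ∑ i ∈ T₀ ∪ T1, (hv i)^2 = ∑ i ∈ T₀, (hv i)^2 + ∑ i ∈ T1, (hv i)^2 :=
        Finset.sum_union hdisjT01
      linarith
    calc nrm2 (restr hv (SS N T T₀ j))
        = Real.sqrt (∑ i ∈ SS N T T₀ j, (hv i)^2) := nrm2_eq_sqrt_sum hv _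
      _ ≤ Real.sqrt (∑ i ∈ T₀ ∪ T1, (hv i)^2) := Real.sqrt_le_sqrt h1
      _ = P := (nrm2_eq_sqrt_sum hv _).symm
  have hSS1 : ∀ j ∈ Finset.Icc 1 N, nrm1 (restr hv (SS N T T₀ j)) ≤
      Real.sqrt s * (Real.sqrt (1 + ∑ i ∈ Finset.Icc j N, (ρ i - 2*α i*ρ i)) * P) := by
    intro j hj
    calc nrm1 (restr hv (SS N T T₀ j))
        ≤ Real.sqrt (SS N T T₀ j).card * nrm2 (restr hv (SS N T T₀ j)) :=
          nrm1_le_sqrt_card hv _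
      _ ≤ Real.sqrt (SS N T T₀ j).card * P :=
          mul_le_mul_of_nonneg_left (hSSP j hj) (Real.sqrt_nonneg _)
      _ = Real.sqrt s * (Real.sqrt (1 + ∑ i ∈ Finset.Icc j N, (ρ i - 2*α i*ρ i)) * P) := by
          rw [hcards j hj, Real.sqrt_mul (le_of_lt hs')]
          ring
  -- the cone bound
  have hconesplit : nrm1 (restr hv T₀ᶜ) =
      ∑ i ∈ T₀ᶜ, u i * |hv i| + ∑ i ∈ T₀ᶜ, (1 - u i) * |hv i| := by
    rw [nrm1_restr, ← Finset.sum_add_distrib]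
    exact Finset.sum_congr rfl fun i _ => by ring
  have hcone : nrm1 (restr hv T₀ᶜ) ≤ K * Real.sqrt s * P + 2 * Dt := by
    have hstep : w N * nrm1 (restr hv T₀) +
        ∑ j ∈ Finset.Icc 1 N, cc j * nrm1 (restr hv (SS N T T₀ j)) ≤
        (w N + ∑ j ∈ Finset.Icc 1 N, cc j *
          Real.sqrt (1 + ∑ i ∈ Finset.Icc j N, (ρ i - 2*α i*ρ i))) * (Real.sqrt s * P) := by
      rw [add_mul, Finset.sum_mul]
      refine add_le_add (mul_le_mul_of_nonneg_left hT0P hwN) ?_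
      refine Finset.sum_le_sum fun j hj => ?_
      calc cc j * nrm1 (restr hv (SS N T T₀ j))
          ≤ cc j * (Real.sqrt s *
            (Real.sqrt (1 + ∑ i ∈ Finset.Icc j N, (ρ i - 2*α i*ρ i)) * P)) :=
            mul_le_mul_of_nonneg_left (hSS1 j hj) (hcc0 j hj)
        _ = cc j * Real.sqrt (1 + ∑ i ∈ Finset.Icc j N, (ρ i - 2*α i*ρ i)) *
            (Real.sqrt s * P) := by ring
    have hKP : (w N + ∑ j ∈ Finset.Icc 1 N, cc j *
        Real.sqrt (1 + ∑ i ∈ Finset.Icc j N, (ρ i - 2*α i*ρ i))) * (Real.sqrt s * P) =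
        K * Real.sqrt s * P := by rw [hKeq]; ring
    rw [hKP] at hstep
    rw [hconesplit]
    linarith only [hsum1, hstep, hcone0]
  -- final algebra
  set κ : ℝ := K / Real.sqrt a with hκ
  have hκ0 : 0 ≤ κ := div_nonneg hK0 hsqa.le
  set R : ℝ := 2 / (Real.sqrt a * Real.sqrt s) * Dt with hR
  have hR0 : 0 ≤ R := mul_nonneg (by positivity) hDt0
  have hQKP : Q ≤ κ * P + R := by
    have h1 : Q ≤ (Real.sqrt ((as:ℕ):ℝ))⁻¹ * (K * Real.sqrt s * P + 2 * Dt) := by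
      rw [hQdef]
      exact mul_le_mul_of_nonneg_left hcone (by positivity)
    have h2 : (Real.sqrt ((as:ℕ):ℝ))⁻¹ * (K * Real.sqrt s * P + 2 * Dt) = κ * P + R := by
      rw [hsq_as, hκ, hR]
      field_simp
    rw [h2] at h1
    exact h1
  set denom : ℝ := d - κ * e with hdenom
  have hdenom0 : 0 < denom := by rw [hdenom]; linarith [hden]
  have hQd : Q * denom ≤ 2*κ*ε + R*d := by
    have u1 : κ * (d * P) ≤ κ * (2*ε + e * Q) := mul_le_mul_of_nonneg_left hdP hκ0
    have u2 : Q * d ≤ (κ * P + R) * d := mul_le_mul_of_nonneg_right hQKP hd0.le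
    calc Q * denom = Q*d - κ*e*Q := by rw [hdenom]; ring
      _ ≤ (κ*P + R)*d - κ*e*Q := by linarith only [u2]
      _ = κ*(d*P) + R*d - κ*e*Q := by ring
      _ ≤ κ*(2*ε + e*Q) + R*d - κ*e*Q := by linarith only [u1]
      _ = 2*κ*ε + R*d := by ring
  have hPdenom : P * denom ≤ 2*ε + e*R := by
    have s1 : (d*P) * denom ≤ (2*ε + e*Q) * denom := mul_le_mul_of_nonneg_right hdP hdenom0.le
    have s2 : e*(Q*denom) ≤ e*(2*κ*ε + R*d) := mul_le_mul_of_nonneg_left hQd he0.le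
    have s3 : (2*ε + e*Q)*denom = 2*ε*denom + e*(Q*denom) := by ring
    have s4 : (d*P)*denom ≤ 2*ε*denom + e*(2*κ*ε + R*d) := by
      rw [s3] at s1; linarith only [s1, s2]
    have s5 : 2*ε*denom + e*(2*κ*ε + R*d) = (2*ε + e*R)*d := by rw [hdenom]; ring
    have s6 : P*denom*d ≤ (2*ε+e*R)*d := by
      calc P*denom*d = (d*P)*denom := by ring
        _ ≤ 2*ε*denom + e*(2*κ*ε + R*d) := s4
        _ = (2*ε + e*R)*d := s5
    exact le_of_mul_le_mul_right s6 hd0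
  have hfinal : nrm2 hv * denom ≤ 2*(1+κ)*ε + (d+e)*R := by
    have t1 : nrm2 hv * denom ≤ (P+Q)*denom := mul_le_mul_of_nonneg_right hHPQ hdenom0.le
    have t2 : (P+Q)*denom = P*denom + Q*denom := by ring
    rw [t2] at t1
    linarith only [t1, hPdenom, hQd]
  rw [hDg]
  have hgoal_eq : 2*(1+κ)/denom*ε + 2/Real.sqrt a*(d+e)/denom*(Real.sqrt ((s:ℕ):ℝ))⁻¹*Dt =
      (2*(1+κ)*ε + (d+e)*R)/denom := by
    rw [hR]
    field_simp
  rw [hgoal_eq, le_div_iff₀ hdenom0]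
  exact hfinal
end

section
/- Let h ∈ ℝ^n, let k be a positive integer, and let T, T' ⊆ {1,…,n} be disjoint sets with |T'| = k, |T| ≤ k, and |h_u| ≤ |h_v| for every u ∈ T and v ∈ T'. Then ‖h_T‖₂ ≤ k^{−1/2}‖h_{T'}‖₁. -/
open Finset

/-- the block-sorting bound `‖h_T‖₂ ≤ k^{-1/2} ‖h_{T'}‖₁`. -/
theorem block_sorting_bound
    {n : ℕ} (h : Fin n → ℝ) (k : ℕ) (hk : 0 < k) (T T' : Finset (Fin n))
    (hTT' : Disjoint T T') (hT'card : T'.card = k) (hTcard : T.card ≤ k)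
    (hsorted : ∀ u ∈ T, ∀ v ∈ T', |h u| ≤ |h v|) :
    nrm2 (restr h T) ≤ (Real.sqrt (k : ℝ))⁻¹ * nrm1 (restr h T') := by
  have hkpos : (0:ℝ) < k := Nat.cast_pos.mpr hk
  have hM1 : nrm1 (restr h T') = ∑ v ∈ T', |h v| := by
    simp [nrm1, restr, apply_ite abs, abs_zero, Finset.sum_ite_mem]
  set M : ℝ := ∑ v ∈ T', |h v| with hMdef
  have hM0 : 0 ≤ M := Finset.sum_nonneg fun v _ => abs_nonneg _
  have key : ∀ u ∈ T, |h u| ≤ M / k := by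
    intro u hu
    rw [le_div_iff₀ hkpos]
    calc |h u| * k = ∑ v ∈ T', |h u| := by
          rw [Finset.sum_const, nsmul_eq_mul, hT'card, mul_comm]
      _ ≤ M := Finset.sum_le_sum fun v hv => hsorted u hu v hv
  have hsumsq : ∑ i ∈ T, (h i)^2 ≤ M^2 / k := by
    calc ∑ i ∈ T, (h i)^2 ≤ ∑ _i ∈ T, (M / k)^2 := by
          refine Finset.sum_le_sum fun i hi => ?_
          rw [← sq_abs]
          exact pow_le_pow_left₀ (abs_nonneg _) (key i hi) 2
      _ = T.card * (M / k)^2 := by rw [Finset.sum_const, nsmul_eq_mul]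
      _ ≤ k * (M / k)^2 := by
          apply mul_le_mul_of_nonneg_right _ (sq_nonneg _)
          exact_mod_cast hTcard
      _ = M^2 / k := by field_simp
  have h2 : nrm2 (restr h T) = Real.sqrt (∑ i ∈ T, (h i)^2) := by
    rw [nrm2]
    congr 1
    simp [restr, apply_ite (· ^ 2), Finset.sum_ite_mem]
  rw [h2, hM1]
  calc Real.sqrt (∑ i ∈ T, (h i)^2) ≤ Real.sqrt (M^2 / k) :=
        Real.sqrt_le_sqrt hsumsq
    _ = M / Real.sqrt k := by
        rw [Real.sqrt_div (sq_nonneg M), Real.sqrt_sq hM0]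
    _ = (Real.sqrt k)⁻¹ * M := by ring
end

section
/- Let 1 ≥ w₁ ≥ w₂ ≥ … ≥ w_N ≥ 0, let ρ₁,…,ρ_N ≥ 0 with Σ_{i=1}^N ρᵢ = ρ where 1 + ρ(1−2α) ≥ 0, and let α₁ = … = α_N = α with α ≥ 1/2. Define b(w) = w + (1−w)√(1 + ρ − 2αρ) and K_N = w_N + (1−w₁)√(1 + Σ_{i=1}^N(ρᵢ − 2αρᵢ)) + Σ_{j=2}^N (w_{j−1}−w_j)√(1 + Σ_{i=j}^N(ρᵢ − 2αρᵢ)). Then b(w_N) ≤ K_N ≤ b(w₁); consequently, for any a > 0, (a−b(w₁)²)/(a+b(w₁)²) ≤ (a−K_N²)/(a+K_N²) ≤ (a−b(w_N)²)/(a+b(w_N)²). -/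
open Finset

lemma tele_sum (f : ℕ → ℝ) : ∀ N, 1 ≤ N →
    ∑ j ∈ Finset.Icc 2 N, (f (j - 1) - f j) = f 1 - f N := by
  intro N
  induction N with
  | zero => omega
  | succ n ih =>
    intro _
    rcases Nat.eq_or_lt_of_le (show 1 ≤ n + 1 by omega) with h | h
    · simp [← h]
    · have hn : 1 ≤ n := by omega
      rw [Finset.sum_Icc_succ_top (by omega), ih hn]
      simp

lemma frac_mono (a x y : ℝ) (ha : 0 < a) (hy : 0 ≤ y) (hxy : y ≤ x) :
    (a - x) / (a + x) ≤ (a - y) / (a + y) := by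
  rw [div_le_div_iff₀ (by linarith) (by linarith)]
  nlinarith

/-- the sandwich `b(w_N) ≤ K_N ≤ b(w₁)` when `α ≥ 1/2`, and the resulting
ordering of the sufficient RIP thresholds. -/
theorem KN_sandwich_of_alpha_ge_half
    (N : ℕ) (hN : 1 ≤ N) (w : ℕ → ℝ) (hw1 : w 1 ≤ 1) (hwN : 0 ≤ w N)
    (hwmono : ∀ i j, 1 ≤ i → i ≤ j → j ≤ N → w j ≤ w i)
    (ρf : ℕ → ℝ) (hρf : ∀ i ∈ Finset.Icc 1 N, 0 ≤ ρf i)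
    (ρ α : ℝ) (hsum : ∑ i ∈ Finset.Icc 1 N, ρf i = ρ)
    (hpos : 0 ≤ 1 + ρ * (1 - 2 * α)) (hα : 1 / 2 ≤ α) :
    (w N + (1 - w N) * Real.sqrt (1 + ρ - 2 * α * ρ) ≤ KN N w ρf (fun _ => α)) ∧
    (KN N w ρf (fun _ => α) ≤ w 1 + (1 - w 1) * Real.sqrt (1 + ρ - 2 * α * ρ)) ∧
    ∀ a : ℝ, 0 < a →
      ((a - (w 1 + (1 - w 1) * Real.sqrt (1 + ρ - 2 * α * ρ)) ^ 2) /
          (a + (w 1 + (1 - w 1) * Real.sqrt (1 + ρ - 2 * α * ρ)) ^ 2) ≤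
        (a - (KN N w ρf fun _ => α) ^ 2) / (a + (KN N w ρf fun _ => α) ^ 2)) ∧
      ((a - (KN N w ρf fun _ => α) ^ 2) / (a + (KN N w ρf fun _ => α) ^ 2) ≤
        (a - (w N + (1 - w N) * Real.sqrt (1 + ρ - 2 * α * ρ)) ^ 2) /
          (a + (w N + (1 - w N) * Real.sqrt (1 + ρ - 2 * α * ρ)) ^ 2)) := by
  set c : ℕ → ℝ := fun i => ρf i - 2 * α * ρf i with hc
  have hcsum : ∑ i ∈ Finset.Icc 1 N, c i = ρ - 2 * α * ρ := by
    simp only [hc]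
    rw [Finset.sum_sub_distrib, ← Finset.mul_sum, hsum]
  have hcnonpos : ∀ i ∈ Finset.Icc 1 N, c i ≤ 0 := by
    intro i hi
    have := hρf i hi
    simp only [hc]
    nlinarith
  set g : ℕ → ℝ := fun j => Real.sqrt (1 + ∑ i ∈ Finset.Icc j N, c i) with hg
  have hg1 : g 1 = Real.sqrt (1 + ρ - 2 * α * ρ) := by
    simp only [hg, hcsum]; ring_nf
  have hwNw1 : w N ≤ w 1 := hwmono 1 N le_rfl hN le_rfl
  have hglow : ∀ j, 2 ≤ j → g 1 ≤ g j := by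
    intro j hj
    apply Real.sqrt_le_sqrt
    have hsub : Finset.Icc j N ⊆ Finset.Icc 1 N := Finset.Icc_subset_Icc_left (by omega)
    have : ∑ i ∈ Finset.Icc 1 N, c i ≤ ∑ i ∈ Finset.Icc j N, c i := by
      rw [← Finset.sum_sdiff hsub]
      have : ∑ i ∈ Finset.Icc 1 N \ Finset.Icc j N, c i ≤ 0 :=
        Finset.sum_nonpos fun i hi => hcnonpos i (Finset.mem_sdiff.mp hi).1
      linarith
    linarith
  have hghigh : ∀ j, 1 ≤ j → g j ≤ 1 := by
    intro j hj
    simp only [hg]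
    apply Real.sqrt_le_one.mpr
    have hsub : Finset.Icc j N ⊆ Finset.Icc 1 N := Finset.Icc_subset_Icc_left (by omega)
    have : ∑ i ∈ Finset.Icc j N, c i ≤ 0 :=
      Finset.sum_nonpos fun i hi => hcnonpos i (hsub hi)
    linarith
  have hgnn : 0 ≤ g 1 := Real.sqrt_nonneg _
  have hg1le : g 1 ≤ 1 := hghigh 1 le_rfl
  have hKN : KN N w ρf (fun _ => α) =
      w N + (1 - w 1) * g 1 + ∑ j ∈ Finset.Icc 2 N, (w (j - 1) - w j) * g j := by
    rfl
  have htele : ∑ j ∈ Finset.Icc 2 N, (w (j - 1) - w j) = w 1 - w N := tele_sum w N hN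
  have hwdiff : ∀ j ∈ Finset.Icc 2 N, 0 ≤ w (j - 1) - w j := by
    intro j hj
    simp only [Finset.mem_Icc] at hj
    have := hwmono (j - 1) j (by omega) (by omega) hj.2
    linarith
  have hlow : w N + (1 - w N) * g 1 ≤ KN N w ρf (fun _ => α) := by
    rw [hKN]
    have : ∑ j ∈ Finset.Icc 2 N, (w (j - 1) - w j) * g 1 ≤
        ∑ j ∈ Finset.Icc 2 N, (w (j - 1) - w j) * g j := by
      apply Finset.sum_le_sum
      intro j hj
      exact mul_le_mul_of_nonneg_left (hglow j (Finset.mem_Icc.mp hj).1) (hwdiff j hj)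
    rw [← Finset.sum_mul, htele] at this
    nlinarith
  have hhigh : KN N w ρf (fun _ => α) ≤ w 1 + (1 - w 1) * g 1 := by
    rw [hKN]
    have : ∑ j ∈ Finset.Icc 2 N, (w (j - 1) - w j) * g j ≤
        ∑ j ∈ Finset.Icc 2 N, (w (j - 1) - w j) * 1 := by
      apply Finset.sum_le_sum
      intro j hj
      exact mul_le_mul_of_nonneg_left (hghigh j (by have := (Finset.mem_Icc.mp hj).1; omega))
        (hwdiff j hj)
    simp only [mul_one] at this
    rw [htele] at this
    linarith
  rw [← hg1]
  have hbNnn : 0 ≤ w N + (1 - w N) * g 1 := by nlinarith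
  refine ⟨hlow, hhigh, fun a ha => ⟨?_, ?_⟩⟩
  · apply frac_mono _ _ _ ha (by positivity)
    have hK0 : 0 ≤ KN N w ρf (fun _ => α) := le_trans hbNnn hlow
    nlinarith
  · apply frac_mono _ _ _ ha (by positivity)
    have hK0 : 0 ≤ KN N w ρf (fun _ => α) := le_trans hbNnn hlow
    nlinarith
end

section
/- Let 1 ≥ w₁ ≥ w₂ ≥ … ≥ w_N ≥ 0 with w₁ > w_N, let ρ₁,…,ρ_N > 0 with Σ_{i=1}^N ρᵢ = ρ, and let α₁ = … = α_N = α with 0 ≤ α < 1/2. Define b(w) = w + (1−w)√(1 + ρ − 2αρ) and K_N = w_N + (1−w₁)√(1 + Σ_{i=1}^N(ρᵢ − 2αρᵢ)) + Σ_{j=2}^N (w_{j−1}−w_j)√(1 + Σ_{i=j}^N(ρᵢ − 2αρᵢ)). Then b(w₁) < K_N < b(w_N). -/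
open Finset

private lemma telesc (w : ℕ → ℝ) : ∀ n : ℕ, 1 ≤ n →
    ∑ j ∈ Finset.Icc 2 n, (w (j - 1) - w j) = w 1 - w n := by
  intro n hn
  induction n with
  | zero => omega
  | succ m ih =>
    rcases Nat.lt_or_ge 1 (m+1) with h | h
    · have hm : 1 ≤ m := by omega
      rw [Finset.sum_Icc_succ_top (by omega : 2 ≤ m + 1), ih hm]
      simp
    · have : m = 0 := by omega
      subst this
      simp

/-- strict reversal of the sandwich when `α < 1/2` (and the weights are
not all equal, with all `ρᵢ` positive). -/
theorem KN_strict_reversal_of_alpha_lt_half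
    (N : ℕ) (hN : 1 ≤ N) (w : ℕ → ℝ) (hw1 : w 1 ≤ 1) (hwN : 0 ≤ w N)
    (hwmono : ∀ i j, 1 ≤ i → i ≤ j → j ≤ N → w j ≤ w i) (hwstrict : w N < w 1)
    (ρf : ℕ → ℝ) (hρf : ∀ i ∈ Finset.Icc 1 N, 0 < ρf i)
    (ρ α : ℝ) (hsum : ∑ i ∈ Finset.Icc 1 N, ρf i = ρ)
    (hα0 : 0 ≤ α) (hα : α < 1 / 2) :
    (w 1 + (1 - w 1) * Real.sqrt (1 + ρ - 2 * α * ρ) < KN N w ρf (fun _ => α)) ∧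
    (KN N w ρf (fun _ => α) < w N + (1 - w N) * Real.sqrt (1 + ρ - 2 * α * ρ)) := by
  -- basic setup
  set S : ℕ → ℝ := fun j => Real.sqrt (1 + ∑ i ∈ Finset.Icc j N, (ρf i - 2 * α * ρf i))
    with hS
  have hterm : ∀ i ∈ Finset.Icc 1 N, 0 < ρf i - 2 * α * ρf i := by
    intro i hi
    have := hρf i hi
    nlinarith
  have hsum1 : (1 : ℝ) + ∑ i ∈ Finset.Icc 1 N, (ρf i - 2 * α * ρf i)
      = 1 + ρ - 2 * α * ρ := by
    rw [Finset.sum_sub_distrib, ← Finset.mul_sum, hsum]; ring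
  have hS1 : S 1 = Real.sqrt (1 + ρ - 2 * α * ρ) := by
    rw [hS]; exact congrArg Real.sqrt hsum1
  have hpos : ∀ j ∈ Finset.Icc 2 N, 0 < ∑ i ∈ Finset.Icc j N, (ρf i - 2 * α * ρf i) := by
    intro j hj
    rw [Finset.mem_Icc] at hj
    apply Finset.sum_pos
    · intro i hi
      rw [Finset.mem_Icc] at hi
      exact hterm i (Finset.mem_Icc.mpr ⟨by omega, hi.2⟩)
    · exact ⟨j, Finset.mem_Icc.mpr ⟨le_refl j, hj.2⟩⟩
  have hSgt1 : ∀ j ∈ Finset.Icc 2 N, 1 < S j := by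
    intro j hj
    have h := hpos j hj
    have : (1:ℝ) ^ 2 < 1 + ∑ i ∈ Finset.Icc j N, (ρf i - 2 * α * ρf i) := by nlinarith
    exact (Real.lt_sqrt (by norm_num)).mpr this
  have hSltS1 : ∀ j ∈ Finset.Icc 2 N, S j < S 1 := by
    intro j hj
    rw [Finset.mem_Icc] at hj
    apply Real.sqrt_lt_sqrt
    · have := hpos j (Finset.mem_Icc.mpr hj); linarith
    · have hsub : Finset.Icc j N ⊆ Finset.Icc 1 N := by
        intro i hi; rw [Finset.mem_Icc] at *; omega
      have h1mem : 1 ∈ Finset.Icc 1 N := Finset.mem_Icc.mpr ⟨le_refl 1, hN⟩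
      have h1not : 1 ∉ Finset.Icc j N := by rw [Finset.mem_Icc]; omega
      have := Finset.sum_lt_sum_of_subset hsub h1mem h1not (hterm 1 h1mem)
        (fun i hi _ => le_of_lt (hterm i hi))
      linarith
  have hcoeff : ∀ j ∈ Finset.Icc 2 N, 0 ≤ w (j - 1) - w j := by
    intro j hj
    rw [Finset.mem_Icc] at hj
    have := hwmono (j - 1) j (by omega) (by omega) hj.2
    linarith
  have htel : ∑ j ∈ Finset.Icc 2 N, (w (j - 1) - w j) = w 1 - w N := telesc w N hN
  have hex : ∃ j ∈ Finset.Icc 2 N, 0 < w (j - 1) - w j := by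
    by_contra h
    push_neg at h
    have : ∑ j ∈ Finset.Icc 2 N, (w (j - 1) - w j) ≤ 0 :=
      Finset.sum_nonpos h
    rw [htel] at this
    linarith
  obtain ⟨j₀, hj₀mem, hj₀⟩ := hex
  have key1 : ∑ j ∈ Finset.Icc 2 N, (w (j - 1) - w j)
      < ∑ j ∈ Finset.Icc 2 N, (w (j - 1) - w j) * S j := by
    apply Finset.sum_lt_sum
    · intro j hj
      have h1 := hSgt1 j hj
      have h2 := hcoeff j hj
      nlinarith
    · exact ⟨j₀, hj₀mem, by nlinarith [hSgt1 j₀ hj₀mem]⟩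
  have key2 : ∑ j ∈ Finset.Icc 2 N, (w (j - 1) - w j) * S j
      < ∑ j ∈ Finset.Icc 2 N, (w (j - 1) - w j) * S 1 := by
    apply Finset.sum_lt_sum
    · intro j hj
      have h1 := hSltS1 j hj
      have h2 := hcoeff j hj
      nlinarith
    · exact ⟨j₀, hj₀mem, by nlinarith [hSltS1 j₀ hj₀mem]⟩
  have hKN : KN N w ρf (fun _ => α)
      = w N + (1 - w 1) * S 1 + ∑ j ∈ Finset.Icc 2 N, (w (j - 1) - w j) * S j := by
    rw [KN, hS1, hsum1]
  rw [htel] at key1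
  rw [← Finset.sum_mul, htel] at key2
  constructor
  · rw [hKN, hS1]; linarith
  · rw [hKN, hS1]; nlinarith
end

section
/- Let w ∈ [0,1), and let ρ₁, ρ₂ ≥ 0 with ρ₁ + ρ₂ ≤ 1. Define γ = 2w − 1 + (1−w)(√(1−ρ₁) + √(1−ρ₂)) and b = w + (1−w)√(1 − ρ₁ − ρ₂). Then γ ≥ b, with equality if and only if ρ₁ρ₂ = 0. -/
open Finset

lemma key_sqrt (a b : ℝ) (ha : 0 ≤ a) (hb : 0 ≤ b) (hab : a + b ≤ 1) :
    (1 + Real.sqrt (1 - a - b) ≤ Real.sqrt (1 - a) + Real.sqrt (1 - b)) ∧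
    (Real.sqrt (1 - a) + Real.sqrt (1 - b) = 1 + Real.sqrt (1 - a - b) ↔ a * b = 0) := by
  set u := Real.sqrt (1 - a) with hu
  set v := Real.sqrt (1 - b) with hv
  set t := Real.sqrt (1 - a - b) with ht
  have ha1 : (0:ℝ) ≤ 1 - a := by linarith
  have hb1 : (0:ℝ) ≤ 1 - b := by linarith
  have ht1 : (0:ℝ) ≤ 1 - a - b := by linarith
  have hu0 : 0 ≤ u := Real.sqrt_nonneg _
  have hv0 : 0 ≤ v := Real.sqrt_nonneg _
  have ht0 : 0 ≤ t := Real.sqrt_nonneg _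
  have hu2 : u ^ 2 = 1 - a := Real.sq_sqrt ha1
  have hv2 : v ^ 2 = 1 - b := Real.sq_sqrt hb1
  have ht2 : t ^ 2 = 1 - a - b := Real.sq_sqrt ht1
  have huv : t ≤ u * v := by
    nlinarith [mul_nonneg ha hb, mul_nonneg hu0 hv0]
  have hle : 1 + t ≤ u + v := by
    nlinarith [mul_nonneg (add_nonneg hu0 hv0) ht0]
  refine ⟨hle, ?_, ?_⟩
  · intro h
    have huvt : u * v = t := by nlinarith
    have : a * b = 0 := by nlinarith
    exact this
  · intro h
    rcases mul_eq_zero.mp h with h0 | h0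
    · subst h0
      simp [hu, hv, ht]
    · subst h0
      simp [hu, hv, ht]
      ring

/-- the Mansour–Yilmaz constant `γ` dominates the single-weight constant
`b`, with equality iff `ρ₁ρ₂ = 0`. -/
theorem gamma_ge_b
    (w ρ₁ ρ₂ : ℝ) (hw0 : 0 ≤ w) (hw1 : w < 1)
    (hρ₁ : 0 ≤ ρ₁) (hρ₂ : 0 ≤ ρ₂) (hρsum : ρ₁ + ρ₂ ≤ 1) :
    (w + (1 - w) * Real.sqrt (1 - ρ₁ - ρ₂) ≤
      2 * w - 1 + (1 - w) * (Real.sqrt (1 - ρ₁) + Real.sqrt (1 - ρ₂))) ∧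
    (2 * w - 1 + (1 - w) * (Real.sqrt (1 - ρ₁) + Real.sqrt (1 - ρ₂)) =
        w + (1 - w) * Real.sqrt (1 - ρ₁ - ρ₂) ↔ ρ₁ * ρ₂ = 0) := by
  obtain ⟨hle, hiff⟩ := key_sqrt ρ₁ ρ₂ hρ₁ hρ₂ hρsum
  have hw : 0 < 1 - w := by linarith
  constructor
  · nlinarith
  · rw [← hiff]
    constructor
    · intro h
      have : (1 - w) * (Real.sqrt (1 - ρ₁) + Real.sqrt (1 - ρ₂)) =
          (1 - w) * (1 + Real.sqrt (1 - ρ₁ - ρ₂)) := by linear_combination h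
      exact mul_left_cancel₀ (ne_of_gt hw) this
    · intro h
      rw [h]; ring
end
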